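/- In the ICW model, the error term R_2 := (√n/√χ_n)·(1/n)∑_i [tanh(t_i*) − tanh((β w_i/E[W_n])·m̃_n + h)] + c·X̃_n satisfies E_{μ_n}[|R_2|] ≤ (χ̃_n/√χ_n)·(β/E[W_n])²·E[W_n²]·E_{μ_n}[X̃_n²]·n^{−1/2}. -/

import Mathlib

open Real BigOperators Finset MeasureTheory Filter ProbabilityTheory Topology
noncomputable section
namespace ICWaux

lemma abs_tanh_lt_one (x : ℝ) : |Real.tanh x| < 1 := by
  rw [Real.tanh_eq_sinh_div_cosh, abs_div, abs_of_pos (Real.cosh_pos x),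
    div_lt_one (Real.cosh_pos x), abs_lt]
  constructor
  · nlinarith [Real.exp_pos x, Real.cosh_add_sinh x]
  · nlinarith [Real.exp_pos (-x), Real.cosh_sub_sinh x]

lemma tanh_sq_lt_one (x : ℝ) : Real.tanh x ^ 2 < 1 := by
  have := abs_tanh_lt_one x
  nlinarith [abs_nonneg (Real.tanh x), sq_abs (Real.tanh x)]

lemma hasDerivAt_tanh (x : ℝ) : HasDerivAt Real.tanh (1 - Real.tanh x ^ 2) x := by
  have hc := Real.cosh_pos x
  have h := (Real.hasDerivAt_sinh x).div (Real.hasDerivAt_cosh x) hc.ne'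
  have he : (fun y => Real.sinh y / Real.cosh y) = Real.tanh := by
    funext y; rw [Real.tanh_eq_sinh_div_cosh]
  rw [show (Real.sinh / Real.cosh) = Real.tanh from he] at h
  refine h.congr_deriv ?_
  rw [Real.tanh_eq_sinh_div_cosh]
  field_simp

lemma continuous_tanh : Continuous Real.tanh := by
  have : Real.tanh = fun y => Real.sinh y / Real.cosh y := by
    funext y; rw [Real.tanh_eq_sinh_div_cosh]
  rw [this]
  exact Real.continuous_sinh.div Real.continuous_cosh fun y => (Real.cosh_pos y).ne'

lemma tanh_lipschitz (a b : ℝ) : |Real.tanh b - Real.tanh a| ≤ |b - a| := by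
  have := Convex.norm_image_sub_le_of_norm_hasDerivWithin_le
    (f := Real.tanh) (f' := fun t => 1 - Real.tanh t ^ 2) (C := 1) (s := Set.univ)
    (fun t _ => (hasDerivAt_tanh t).hasDerivWithinAt)
    (fun t _ => by
      show ‖1 - Real.tanh t ^ 2‖ ≤ 1
      rw [Real.norm_eq_abs, abs_of_nonneg (by nlinarith [tanh_sq_lt_one t])]
      nlinarith [sq_nonneg (Real.tanh t)])
    convex_univ (Set.mem_univ a) (Set.mem_univ b)
  simpa [Real.norm_eq_abs] using this

lemma tanh_taylor_le {a b : ℝ} (hab : a ≤ b) :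
    |Real.tanh b - Real.tanh a - (1 - Real.tanh a ^ 2) * (b - a)| ≤ (b - a) ^ 2 := by
  have hfc : Continuous fun t : ℝ => 1 - Real.tanh t ^ 2 :=
    continuous_const.sub (continuous_tanh.pow 2)
  have hgc : Continuous fun t : ℝ => Real.tanh a ^ 2 - Real.tanh t ^ 2 :=
    continuous_const.sub (continuous_tanh.pow 2)
  have hint : Real.tanh b - Real.tanh a = ∫ t in a..b, (1 - Real.tanh t ^ 2) :=
    (intervalIntegral.integral_eq_sub_of_hasDerivAt (fun t _ => hasDerivAt_tanh t)
      (hfc.intervalIntegrable a b)).symm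
  have hconst : (1 - Real.tanh a ^ 2) * (b - a) = ∫ _t in a..b, (1 - Real.tanh a ^ 2) := by
    rw [intervalIntegral.integral_const]; ring_nf
  have hdiff : Real.tanh b - Real.tanh a - (1 - Real.tanh a ^ 2) * (b - a)
      = ∫ t in a..b, (Real.tanh a ^ 2 - Real.tanh t ^ 2) := by
    rw [hint, hconst, ← intervalIntegral.integral_sub (hfc.intervalIntegrable a b)
      (intervalIntegrable_const)]
    congr 1; funext t; ring
  rw [hdiff]
  have hptw : ∀ t ∈ Set.Icc a b, |Real.tanh a ^ 2 - Real.tanh t ^ 2| ≤ 2 * (t - a) := by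
    intro t ht
    have h1 : Real.tanh a ^ 2 - Real.tanh t ^ 2
        = (Real.tanh a + Real.tanh t) * (Real.tanh a - Real.tanh t) := by ring
    rw [h1, abs_mul]
    have h2 : |Real.tanh a + Real.tanh t| ≤ 2 := by
      have := abs_tanh_lt_one a; have := abs_tanh_lt_one t
      have := abs_add_le (Real.tanh a) (Real.tanh t)
      linarith
    have h3 : |Real.tanh a - Real.tanh t| ≤ t - a := by
      rw [abs_sub_comm]
      calc |Real.tanh t - Real.tanh a| ≤ |t - a| := tanh_lipschitz a t
        _ = t - a := abs_of_nonneg (by linarith [ht.1])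
    exact mul_le_mul h2 h3 (abs_nonneg _) (by norm_num)
  calc |∫ t in a..b, (Real.tanh a ^ 2 - Real.tanh t ^ 2)|
      ≤ ∫ t in a..b, |Real.tanh a ^ 2 - Real.tanh t ^ 2| :=
        intervalIntegral.abs_integral_le_integral_abs hab
    _ ≤ ∫ t in a..b, 2 * (t - a) := by
        apply intervalIntegral.integral_mono_on hab (hgc.abs.intervalIntegrable a b)
          ((by continuity : Continuous fun t : ℝ => 2 * (t - a)).intervalIntegrable a b)
        exact hptw
    _ = (b - a) ^ 2 := by
        have : (∫ t in a..b, 2 * (t - a)) = 2 * ∫ t in a..b, (t - a) := by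
          rw [← intervalIntegral.integral_const_mul]
        rw [this]
        have h2 : (∫ t in a..b, (t - a)) = ∫ t in (a - a)..(b - a), t :=
          intervalIntegral.integral_comp_sub_right (fun t => t) a
        rw [h2, integral_id]
        ring

lemma tanh_taylor (a b : ℝ) :
    |Real.tanh b - Real.tanh a - (1 - Real.tanh a ^ 2) * (b - a)| ≤ (b - a) ^ 2 := by
  rcases le_total a b with hab | hab
  · exact tanh_taylor_le hab
  · have := tanh_taylor_le (neg_le_neg hab)
    simp only [Real.tanh_neg] at this
    have heq : -Real.tanh b - -Real.tanh a - (1 - (-Real.tanh a) ^ 2) * (-b - -a)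
        = -(Real.tanh b - Real.tanh a - (1 - Real.tanh a ^ 2) * (b - a)) := by ring
    rw [heq, abs_neg] at this
    calc |Real.tanh b - Real.tanh a - (1 - Real.tanh a ^ 2) * (b - a)| ≤ (-b - -a) ^ 2 := this
      _ = (b - a) ^ 2 := by ring

end ICWaux

namespace ICW

/-- The real spin value associated to a Boolean: `true ↦ 1`, `false ↦ -1`. -/
def spin (b : Bool) : ℝ := if b then 1 else -1

/-- `E[W_n^k] = (1/n) ∑_i w_i^k`. -/
def EWk (n : ℕ) (w : Fin n → ℝ) (k : ℕ) : ℝ := (1 / n : ℝ) * ∑ i, (w i) ^ k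

/-- `E[W_n] = (1/n) ∑_i w_i`. -/
def EW (n : ℕ) (w : Fin n → ℝ) : ℝ := (1 / n : ℝ) * ∑ i, w i

/-- The (negative) Hamiltonian of the inhomogeneous Curie–Weiss model. -/
def ham (n : ℕ) (w : Fin n → ℝ) (β h : ℝ) (σ : Fin n → Bool) : ℝ :=
  β / (2 * ∑ i, w i) * (∑ i, w i * spin (σ i)) ^ 2 + h * ∑ i, spin (σ i)

/-- Unnormalized Boltzmann–Gibbs weight. -/
def wt (n : ℕ) (w : Fin n → ℝ) (β h : ℝ) (σ : Fin n → Bool) : ℝ :=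
  Real.exp (ham n w β h σ)

/-- Partition function `Z_n`. -/
def Z (n : ℕ) (w : Fin n → ℝ) (β h : ℝ) : ℝ := ∑ σ : Fin n → Bool, wt n w β h σ

/-- Expectation under the ICW measure `μ_n`. -/
def icwE (n : ℕ) (w : Fin n → ℝ) (β h : ℝ) (f : (Fin n → Bool) → ℝ) : ℝ :=
  (∑ σ : Fin n → Bool, wt n w β h σ * f σ) / Z n w β h

open Classical in
/-- Probability of an event under the ICW measure `μ_n`. -/
def icwP (n : ℕ) (w : Fin n → ℝ) (β h : ℝ) (A : (Fin n → Bool) → Prop) : ℝ :=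
  icwE n w β h (fun σ => if A σ then 1 else 0)

/-- Magnetization `m_n`. -/
def mn (n : ℕ) (σ : Fin n → Bool) : ℝ := (1 / n : ℝ) * ∑ i, spin (σ i)

/-- Weighted magnetization `m̃_n`. -/
def mtil (n : ℕ) (w : Fin n → ℝ) (σ : Fin n → Bool) : ℝ :=
  (1 / n : ℝ) * ∑ i, w i * spin (σ i)

/-- Weighted magnetization leaving out spin `i`, `m̃_n^i`. -/
def mtilI (n : ℕ) (w : Fin n → ℝ) (σ : Fin n → Bool) (i : Fin n) : ℝ :=
  (1 / n : ℝ) * ∑ j ∈ Finset.univ.erase i, w j * spin (σ j)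

/-- Argument `√(β/E[W_n])·w_i·x + h`. -/
def arg (n : ℕ) (w : Fin n → ℝ) (β h x : ℝ) (i : Fin n) : ℝ :=
  Real.sqrt (β / EW n w) * w i * x + h

/-- `G_n(x)`. -/
def Gfun (n : ℕ) (w : Fin n → ℝ) (β h : ℝ) (x : ℝ) : ℝ :=
  x ^ 2 / 2 - (1 / n : ℝ) * ∑ i, Real.log (Real.cosh (arg n w β h x i))

/-- `G_n(x; s)` (with tilted argument `x+s`). -/
def GfunS (n : ℕ) (w : Fin n → ℝ) (β h : ℝ) (x s : ℝ) : ℝ :=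
  x ^ 2 / 2 - (1 / n : ℝ) * ∑ i, Real.log (Real.cosh (arg n w β h (x + s) i))

/-- `G_n'(x)`. -/
def Gfun' (n : ℕ) (w : Fin n → ℝ) (β h : ℝ) (x : ℝ) : ℝ :=
  x - (1 / n : ℝ) * ∑ i, Real.sqrt (β / EW n w) * w i * Real.tanh (arg n w β h x i)

/-- `G_n''(x)`. -/
def Gfun'' (n : ℕ) (w : Fin n → ℝ) (β h : ℝ) (x : ℝ) : ℝ :=
  1 - β / EW n w * ((1 / n : ℝ) * ∑ i, (1 - Real.tanh (arg n w β h x i) ^ 2) * (w i) ^ 2)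

/-- `x` has the same sign as `h` (and is `0` when `h = 0`). -/
def SameSign (h x : ℝ) : Prop :=
  (0 < h ∧ 0 < x) ∨ (h < 0 ∧ x < 0) ∨ (h = 0 ∧ x = 0)

/-- `M_n`, defined from a solution `x` of the fixed point equation. -/
def Mn (n : ℕ) (w : Fin n → ℝ) (β h x : ℝ) : ℝ :=
  (1 / n : ℝ) * ∑ i, Real.tanh (arg n w β h x i)

/-- The susceptibility `χ_n`, defined from a solution `x` of the fixed point equation. -/
def chiN (n : ℕ) (w : Fin n → ℝ) (β h x : ℝ) : ℝ :=
  1 - (1 / n : ℝ) * ∑ i, Real.tanh (arg n w β h x i) ^ 2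
    + β / EW n w * ((1 / n : ℝ) * ∑ i, (1 - Real.tanh (arg n w β h x i) ^ 2) * w i) ^ 2
      / Gfun'' n w β h x

/-- `M̃_n`. -/
def Mtil (n : ℕ) (w : Fin n → ℝ) (β x : ℝ) : ℝ := Real.sqrt (EW n w / β) * x

/-- `χ̃_n`. -/
def chiTil (n : ℕ) (w : Fin n → ℝ) (β h x : ℝ) : ℝ :=
  ((1 / n : ℝ) * ∑ i, (1 - Real.tanh (arg n w β h x i) ^ 2) * (w i) ^ 2) / Gfun'' n w β h x

/-- The normalized magnetization `X_n` (as a function of the configuration),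
where `x` is the relevant solution of the fixed point equation. -/
def Xn (n : ℕ) (w : Fin n → ℝ) (β h x : ℝ) (σ : Fin n → Bool) : ℝ :=
  Real.sqrt n * (mn n σ - Mn n w β h x) / Real.sqrt (chiN n w β h x)

/-- The normalized weighted magnetization `X̃_n`. -/
def Xtil (n : ℕ) (w : Fin n → ℝ) (β h x : ℝ) (σ : Fin n → Bool) : ℝ :=
  Real.sqrt n * (mtil n w σ - Mtil n w β x) / Real.sqrt (chiTil n w β h x)

/-- The standard normal cumulative distribution function. -/
def stdGaussCDF (z : ℝ) : ℝ := ((gaussianReal 0 1) (Set.Iic z)).toReal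

/-- Kolmogorov distance between the law of `X` under `μ_n` and the standard normal law. -/
def dK (n : ℕ) (w : Fin n → ℝ) (β h : ℝ) (X : (Fin n → Bool) → ℝ) : ℝ :=
  ⨆ z : ℝ, |icwP n w β h (fun σ => X σ ≤ z) - stdGaussCDF z|

/-- Weight regularity condition (i): the empirical weight distribution converges weakly to
the law `ν` of `W`, which is a probability measure with `E[W] > 0`. -/
def WeightRegI (w : (n : ℕ) → Fin n → ℝ) (ν : Measure ℝ) : Prop :=
  (∀ n i, 0 < w n i) ∧ IsProbabilityMeasure ν ∧
    (∀ f : BoundedContinuousFunction ℝ ℝ,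
      Tendsto (fun n : ℕ => (1 / n : ℝ) * ∑ i, f (w n i)) atTop (𝓝 (∫ x, f x ∂ν))) ∧
    Integrable (fun x => x) ν ∧ 0 < ∫ x, x ∂ν

/-- Weight regularity condition (ii): `E[W_n²] → E[W²] < ∞`. -/
def WeightRegII (w : (n : ℕ) → Fin n → ℝ) (ν : Measure ℝ) : Prop :=
  Integrable (fun x => x ^ 2) ν ∧
    Tendsto (fun n => EWk n (w n) 2) atTop (𝓝 (∫ x, x ^ 2 ∂ν))

/-- Weight regularity condition (iii): `E[W_n³] → E[W³] < ∞`. -/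
def WeightRegIII (w : (n : ℕ) → Fin n → ℝ) (ν : Measure ℝ) : Prop :=
  Integrable (fun x => x ^ 3) ν ∧
    Tendsto (fun n => EWk n (w n) 3) atTop (𝓝 (∫ x, x ^ 3 ∂ν))

/-- The critical inverse temperature `β_c = E[W]/E[W²]`. -/
def betaC (ν : Measure ℝ) : ℝ := (∫ x, x ∂ν) / (∫ x, x ^ 2 ∂ν)

/-- The uniqueness regime `U`. -/
def Uniq (ν : Measure ℝ) (β h : ℝ) : Prop :=
  (0 ≤ β ∧ h ≠ 0) ∨ (0 < β ∧ β < betaC ν ∧ h = 0)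

/-- Probability that spin `i` equals `+1` given the remaining spins. -/
def pPlus (n : ℕ) (w : Fin n → ℝ) (β h : ℝ) (σ : Fin n → Bool) (i : Fin n) : ℝ :=
  wt n w β h (Function.update σ i true) /
    (wt n w β h (Function.update σ i true) + wt n w β h (Function.update σ i false))

/-- Conditional expectation given `F_n` (the σ-algebra generated by `σ`) of a function of
`(σ, I, σ'_I)`, where `I` is uniform on `[n]` and `σ'_I` is resampled from the conditional
distribution of the `I`-th spin given the others. -/
def condAvg (n : ℕ) (w : Fin n → ℝ) (β h : ℝ)
    (f : (Fin n → Bool) → Fin n → Bool → ℝ) (σ : Fin n → Bool) : ℝ :=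
  (1 / n : ℝ) * ∑ i, (pPlus n w β h σ i * f σ i true + (1 - pPlus n w β h σ i) * f σ i false)

/-- The increment `X_n − X'_n` as a function of `(σ, I, σ'_I)`. -/
def XnD (n : ℕ) (w : Fin n → ℝ) (β h x : ℝ) (σ : Fin n → Bool) (i : Fin n) (b : Bool) : ℝ :=
  (spin (σ i) - spin b) / (Real.sqrt n * Real.sqrt (chiN n w β h x))

/-- The increment `X̃_n − X̃'_n` as a function of `(σ, I, σ'_I)`. -/
def XtilD (n : ℕ) (w : Fin n → ℝ) (β h x : ℝ) (σ : Fin n → Bool) (i : Fin n) (b : Bool) : ℝ :=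
  w i * (spin (σ i) - spin b) / (Real.sqrt n * Real.sqrt (chiTil n w β h x))

/-- The constant `c` in the regression equation. -/
def cconst (n : ℕ) (w : Fin n → ℝ) (β h x : ℝ) : ℝ :=
  Real.sqrt (chiTil n w β h x) / Real.sqrt (chiN n w β h x) * (β / EW n w) *
    ((1 / n : ℝ) * ∑ i, (1 - Real.tanh (arg n w β h x i) ^ 2) * w i)

end ICW

namespace ICW

/-- Error term `R_2`. -/
def R2 (n : ℕ) (w : Fin n → ℝ) (β h x : ℝ) (σ : Fin n → Bool) : ℝ :=
  Real.sqrt n / Real.sqrt (chiN n w β h x) *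
    ((1 / n : ℝ) * ∑ i, (Real.tanh (arg n w β h x i)
      - Real.tanh (β * w i / EW n w * mtil n w σ + h)))
  + cconst n w β h x * Xtil n w β h x σ

/-- **Bound on the error term `R_2`**:
`E[|R_2|] ≤ (χ̃_n/√χ_n)·(β/E[W_n])²·E[W_n²]·E[X̃_n²]·n^{−1/2}`. -/
theorem R2_bound (n : ℕ) (hn : 0 < n) (w : Fin n → ℝ) (hw : ∀ i, 0 < w i)
    (β h : ℝ) (hβ : 0 < β) (x : ℝ) (hx : Gfun' n w β h x = 0) (hsign : SameSign h x)
    (hG'' : 0 < Gfun'' n w β h x) :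
    icwE n w β h (fun σ => |R2 n w β h x σ|)
      ≤ chiTil n w β h x / Real.sqrt (chiN n w β h x) * (β / EW n w) ^ 2 * EWk n w 2 *
          icwE n w β h (fun σ => Xtil n w β h x σ ^ 2) / Real.sqrt n := by
  classical
  have hnR : (0:ℝ) < n := Nat.cast_pos.mpr hn
  haveI : Nonempty (Fin n) := ⟨⟨0, hn⟩⟩
  have hne : (Finset.univ : Finset (Fin n)).Nonempty := Finset.univ_nonempty
  have hE : 0 < EW n w := by
    unfold EW
    exact mul_pos (by positivity) (Finset.sum_pos (fun i _ => hw i) hne)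
  have hNum : 0 < (1 / n : ℝ) * ∑ i, (1 - Real.tanh (arg n w β h x i) ^ 2) * (w i) ^ 2 := by
    apply mul_pos (by positivity)
    exact Finset.sum_pos (fun i _ => mul_pos
      (by nlinarith [ICWaux.tanh_sq_lt_one (arg n w β h x i)]) (pow_pos (hw i) 2)) hne
  have hct : 0 < chiTil n w β h x := div_pos hNum hG''
  have hs2 : (1 / n : ℝ) * ∑ i, Real.tanh (arg n w β h x i) ^ 2 < 1 := by
    have hlt : ∑ i, Real.tanh (arg n w β h x i) ^ 2 < ∑ _i : Fin n, (1:ℝ) :=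
      Finset.sum_lt_sum_of_nonempty hne (fun i _ => ICWaux.tanh_sq_lt_one _)
    have hcard : ∑ _i : Fin n, (1:ℝ) = n := by simp
    rw [hcard] at hlt
    rw [one_div, inv_mul_eq_div]
    exact (div_lt_one hnR).mpr hlt
  have hc : 0 < chiN n w β h x := by
    unfold chiN
    have h3 : 0 ≤ β / EW n w *
        ((1 / n : ℝ) * ∑ i, (1 - Real.tanh (arg n w β h x i) ^ 2) * w i) ^ 2
          / Gfun'' n w β h x :=
      div_nonneg (mul_nonneg (div_nonneg hβ.le hE.le) (sq_nonneg _)) hG''.le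
    linarith
  have hsc : 0 < Real.sqrt (chiN n w β h x) := Real.sqrt_pos.mpr hc
  have hsct : 0 < Real.sqrt (chiTil n w β h x) := Real.sqrt_pos.mpr hct
  have hsn : 0 < Real.sqrt n := Real.sqrt_pos.mpr hnR
  have hss : Real.sqrt n * Real.sqrt n = (n:ℝ) := Real.mul_self_sqrt hnR.le
  have harg : ∀ i, arg n w β h x i = β * w i / EW n w * Mtil n w β x + h := by
    intro i
    unfold arg Mtil
    have key : Real.sqrt (β / EW n w) = β / EW n w * Real.sqrt (EW n w / β) := by
      rw [Real.sqrt_div hβ.le, Real.sqrt_div hE.le]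
      have h1 : Real.sqrt β * Real.sqrt β = β := Real.mul_self_sqrt hβ.le
      have h2 : Real.sqrt (EW n w) * Real.sqrt (EW n w) = EW n w := Real.mul_self_sqrt hE.le
      have hb : Real.sqrt β ≠ 0 := by positivity
      have he : Real.sqrt (EW n w) ≠ 0 := by positivity
      field_simp
      linear_combination EW n w * h1 - β * h2
    rw [key]; ring
  set C : ℝ := chiTil n w β h x / Real.sqrt (chiN n w β h x) * (β / EW n w) ^ 2 * EWk n w 2
    with hC
  have hpt : ∀ σ : Fin n → Bool,
      |R2 n w β h x σ| ≤ C / Real.sqrt n * Xtil n w β h x σ ^ 2 := by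
    intro σ
    set m := mtil n w σ with hm
    set M := Mtil n w β x with hM
    set err : Fin n → ℝ := fun i =>
      Real.tanh (β * w i / EW n w * m + h) - Real.tanh (arg n w β h x i)
        - (1 - Real.tanh (arg n w β h x i) ^ 2) * (β * w i / EW n w * (m - M)) with herrdef
    have herr : ∀ i, |err i| ≤ (β * w i / EW n w) ^ 2 * (m - M) ^ 2 := by
      intro i
      have ht := ICWaux.tanh_taylor (arg n w β h x i) (β * w i / EW n w * m + h)
      have hba : β * w i / EW n w * m + h - arg n w β h x i
          = β * w i / EW n w * (m - M) := by rw [harg i]; ring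
      rw [hba] at ht
      calc |err i| = |Real.tanh (β * w i / EW n w * m + h) - Real.tanh (arg n w β h x i)
            - (1 - Real.tanh (arg n w β h x i) ^ 2) * (β * w i / EW n w * (m - M))| := by
            simp only [herrdef]
        _ ≤ (β * w i / EW n w * (m - M)) ^ 2 := ht
        _ = (β * w i / EW n w) ^ 2 * (m - M) ^ 2 := by ring
    have hR2eq : R2 n w β h x σ = -(Real.sqrt n / Real.sqrt (chiN n w β h x)
        * ((1 / n : ℝ) * ∑ i, err i)) := by
      unfold R2 cconst Xtil
      rw [← hm, ← hM]
      have hsplit : ∑ i, (Real.tanh (arg n w β h x i)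
            - Real.tanh (β * w i / EW n w * m + h))
          = -(∑ i, err i)
            - β / EW n w * (m - M) * ∑ i, (1 - Real.tanh (arg n w β h x i) ^ 2) * w i := by
        rw [← Finset.sum_neg_distrib, Finset.mul_sum, ← Finset.sum_sub_distrib]
        apply Finset.sum_congr rfl
        intro i _
        simp only [herrdef]
        have hEne : EW n w ≠ 0 := hE.ne'
        field_simp
        ring
      rw [hsplit]
      have hctne : Real.sqrt (chiTil n w β h x) ≠ 0 := hsct.ne'
      have hcne : Real.sqrt (chiN n w β h x) ≠ 0 := hsc.ne'
      have hnne : (n:ℝ) ≠ 0 := hnR.ne'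
      field_simp
      ring
    have hXt : (m - M) ^ 2 = chiTil n w β h x * Xtil n w β h x σ ^ 2
        / (Real.sqrt n * Real.sqrt n) := by
      rw [hss]
      unfold Xtil
      rw [← hm, ← hM, div_pow, mul_pow, Real.sq_sqrt hnR.le, Real.sq_sqrt hct.le]
      have hctne : chiTil n w β h x ≠ 0 := hct.ne'
      have hnne : (n:ℝ) ≠ 0 := hnR.ne'
      field_simp
    calc |R2 n w β h x σ|
        = Real.sqrt n / Real.sqrt (chiN n w β h x) * |(1 / n : ℝ) * ∑ i, err i| := by
          rw [hR2eq, abs_neg, abs_mul,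
            abs_of_pos (show (0:ℝ) < Real.sqrt n / Real.sqrt (chiN n w β h x) by positivity)]
      _ ≤ Real.sqrt n / Real.sqrt (chiN n w β h x)
            * ((1 / n : ℝ) * ∑ i, (β * w i / EW n w) ^ 2 * (m - M) ^ 2) := by
          apply mul_le_mul_of_nonneg_left _ (by positivity)
          rw [abs_mul, abs_of_pos (show (0:ℝ) < (1/n:ℝ) by positivity)]
          apply mul_le_mul_of_nonneg_left _ (by positivity)
          calc |∑ i, err i| ≤ ∑ i, |err i| := Finset.abs_sum_le_sum_abs _ _
            _ ≤ ∑ i, (β * w i / EW n w) ^ 2 * (m - M) ^ 2 :=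
              Finset.sum_le_sum (fun i _ => herr i)
      _ = Real.sqrt n / Real.sqrt (chiN n w β h x)
            * ((β / EW n w) ^ 2 * (m - M) ^ 2 * EWk n w 2) := by
          have hmm : ∀ i, (β * w i / EW n w) ^ 2 * (m - M) ^ 2
              = ((β / EW n w) ^ 2 * (m - M) ^ 2) * (w i) ^ 2 := fun i => by ring
          rw [Finset.sum_congr rfl (fun i _ => hmm i), ← Finset.mul_sum]
          unfold EWk
          ring
      _ = C / Real.sqrt n * Xtil n w β h x σ ^ 2 := by
          rw [hXt, hC]
          have hcne : Real.sqrt (chiN n w β h x) ≠ 0 := hsc.ne'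
          have hnne : Real.sqrt n ≠ 0 := hsn.ne'
          field_simp
  have hZ : 0 < Z n w β h :=
    Finset.sum_pos (fun σ _ => Real.exp_pos _) Finset.univ_nonempty
  have hmono : icwE n w β h (fun σ => |R2 n w β h x σ|)
      ≤ icwE n w β h (fun σ => C / Real.sqrt n * Xtil n w β h x σ ^ 2) := by
    unfold icwE
    have hsum : ∑ σ : Fin n → Bool, wt n w β h σ * |R2 n w β h x σ|
        ≤ ∑ σ : Fin n → Bool, wt n w β h σ * (C / Real.sqrt n * Xtil n w β h x σ ^ 2) :=
      Finset.sum_le_sum fun σ _ =>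
        mul_le_mul_of_nonneg_left (hpt σ) (Real.exp_pos _).le
    exact div_le_div_of_nonneg_right hsum hZ.le
  have hlin : icwE n w β h (fun σ => C / Real.sqrt n * Xtil n w β h x σ ^ 2)
      = C / Real.sqrt n * icwE n w β h (fun σ => Xtil n w β h x σ ^ 2) := by
    unfold icwE
    have hmul : ∑ σ : Fin n → Bool, wt n w β h σ * (C / Real.sqrt n * Xtil n w β h x σ ^ 2)
        = C / Real.sqrt n * ∑ σ : Fin n → Bool, wt n w β h σ * Xtil n w β h x σ ^ 2 := by
      rw [Finset.mul_sum]
      exact Finset.sum_congr rfl fun σ _ => by ring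
    rw [hmul, mul_div_assoc]
  calc icwE n w β h (fun σ => |R2 n w β h x σ|)
      ≤ icwE n w β h (fun σ => C / Real.sqrt n * Xtil n w β h x σ ^ 2) := hmono
    _ = C / Real.sqrt n * icwE n w β h (fun σ => Xtil n w β h x σ ^ 2) := hlin
    _ = C * icwE n w β h (fun σ => Xtil n w β h x σ ^ 2) / Real.sqrt n := by ring

end ICW
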